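/- Let (C,λ) be a (p⁺,N₀)-divergent layered Markov chain with F = λ⁻¹([0,N₀]), α the restriction of λ to S ∖ Av_C(F), and 1/2 < p < p⁺. Then (W^p, [0,N₀]) is an α-abstraction of (C,F); i.e., α(s) ∈ [0,N₀] for s ∈ F, and for all s ∈ S ∖ (F ∪ Av_C(F)), ∑_{s' ∉ Av_C(F)} P(s,s')·κ^{max(α(s')−N₀,0)} ≤ κ^{α(s)−N₀}, where κ = (1−p)/p. -/

import Mathlib

open scoped ENNReal NNReal BigOperators
open Filter

noncomputable section

variable {S : Type*}

/-- Probability of following a finite path (list of successive states). -/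
def pathProb (P : S → S → ℝ≥0∞) : List S → ℝ≥0∞
  | [] => 1
  | [_] => 1
  | a :: b :: l => P a b * pathProb P (b :: l)

/-- `l` is a finite path starting at `s` that visits `T` for the first time
at its last element. -/
def FirstHitPath (T : Set S) (s : S) (l : List S) : Prop :=
  l.head? = some s ∧ ∃ h : l ≠ [], l.getLast h ∈ T ∧
    ∀ i : Fin l.length, (i : ℕ) + 1 < l.length → l.get i ∉ T

/-- Probability of eventually reaching `T` from `s`. -/
def reachProb (P : S → S → ℝ≥0∞) (T : Set S) (s : S) : ℝ≥0∞ :=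
  ∑' l : {l : List S // FirstHitPath T s l}, pathProb P (l : List S)

/-- The avoid set: states from which `T` is unreachable. -/
def Av (P : S → S → ℝ≥0∞) (T : Set S) : Set S := {s | reachProb P T s = 0}

/-- Probability that, starting from `s`, the chain stays outside `R`
during its first `n` steps (i.e. the hitting time of `R` is `> n`). -/
def surviveProb (P : S → S → ℝ≥0∞) (R : Set S) (s : S) (n : ℕ) : ℝ≥0∞ :=
  ∑' l : {l : List S // l.length = n + 1 ∧ l.head? = some s ∧ ∀ x ∈ l, x ∉ R},
    pathProb P (l : List S)

/-- Expected hitting time of `R` from `s`, via `E τ = ∑_{n≥0} Pr(τ > n)`. -/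
def expHittingTime (P : S → S → ℝ≥0∞) (R : Set S) (s : S) : ℝ≥0∞ :=
  ∑' n : ℕ, surviveProb P R s n

/-- Probability that `X_i ∈ A` for all `i ≥ m`, starting from `s`
(as the infimum over finite horizons). -/
def confineProb (P : S → S → ℝ≥0∞) (A : Set S) (s : S) (m : ℕ) : ℝ≥0∞ :=
  ⨅ n : ℕ, ∑' l : {l : List S // l.length = n + 1 ∧ l.head? = some s ∧
      ∀ i : Fin l.length, m ≤ (i : ℕ) → l.get i ∈ A}, pathProb P (l : List S)

/-- Expected reward collected at the first visit of `T`. -/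
def expReward (P : S → S → ℝ≥0∞) (L : List S → ℝ≥0∞) (T : Set S) (s : S) : ℝ≥0∞ :=
  ∑' l : {l : List S // FirstHitPath T s l}, L l * pathProb P (l : List S)

/-- `P` is a stochastic matrix. -/
def IsStochastic (P : S → S → ℝ≥0∞) : Prop := ∀ s, ∑' s', P s s' = 1

/-- States of the biased chain other than `s₋`. -/
abbrev SA (P : S → S → ℝ≥0∞) (F : Set S) := {s : S // s ∉ Av P F}

/-- `P'` (on `(S ∖ Av(F)) ⊎ {s₋}`, with `none = s₋`) is a biased Markov chain
of `(C, T, F)`. -/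
def IsBiased (P : S → S → ℝ≥0∞) (T F : Set S)
    (P' : Option (SA P F) → Option (SA P F) → ℝ≥0∞) : Prop :=
  IsStochastic P' ∧
  P' none none = 1 ∧
  (∀ s : SA P F, s.val ∈ T → P' (some s) (some s) = 1) ∧
  (∀ s s' : SA P F, 0 < P s.val s'.val → 0 < P' (some s) (some s'))

/-- `(C^•, F^•)` together with `α` is an abstraction of `(C, F)`. -/
def IsAbstraction (P : S → S → ℝ≥0∞) (F : Set S)
    {S' : Type*} (P' : S' → S' → ℝ≥0∞) (F' : Set S')
    (α : SA P F → S') : Prop :=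
  (∀ s : SA P F, s.val ∈ F → α s ∈ F') ∧
  (∀ s : SA P F, s.val ∉ F →
    ∑' s' : SA P F, P s.val s'.val * reachProb P' F' (α s')
      ≤ reachProb P' F' (α s))

/-- The decreasing ratio `h(s)` of an abstraction. -/
def hRatio (P : S → S → ℝ≥0∞) (F : Set S)
    {S' : Type*} (P' : S' → S' → ℝ≥0∞) (F' : Set S')
    (α : SA P F → S') (s : SA P F) : ℝ≥0∞ :=
  (∑' s' : SA P F, P s.val s'.val * reachProb P' F' (α s'))
    / reachProb P' F' (α s)

/-- The biased Markov chain constructed from an abstraction. -/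
def biasedKernel (P : S → S → ℝ≥0∞) (F : Set S)
    {S' : Type*} (P' : S' → S' → ℝ≥0∞) (F' : Set S')
    (α : SA P F → S') :
    Option (SA P F) → Option (SA P F) → ℝ≥0∞
  | none, none => 1
  | none, some _ => 0
  | some s, none => 1 - hRatio P F P' F' α s
  | some s, some s' =>
      P s.val s'.val * reachProb P' F' (α s') / reachProb P' F' (α s)

/-- The random walk `W^p` on `ℕ`: `0` absorbing, up with probability `p`,
down with probability `1 - p`. -/
def walkKernel (p : ℝ≥0∞) : ℕ → ℕ → ℝ≥0∞ := fun m n =>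
  if m = 0 then (if n = 0 then 1 else 0)
  else if n = m + 1 then p
  else if n + 1 = m then 1 - p
  else 0

/-- `(C, λ)` is a layered Markov chain. -/
def IsLMC (P : S → S → ℝ≥0∞) (lam : S → ℕ) : Prop :=
  (∀ s s', 0 < P s s' → (lam s : ℤ) ≤ (lam s' : ℤ) + 1) ∧
  (∀ n : ℕ, {s : S | lam s = n}.Finite)

/-- Total probability of increasing the level. -/
def Pup (P : S → S → ℝ≥0∞) (lam : S → ℕ) (s : S) : ℝ≥0∞ :=
  ∑' s' : {s' : S // lam s < lam s'}, P s s'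

/-- Total probability of decreasing the level (by one). -/
def Pdown (P : S → S → ℝ≥0∞) (lam : S → ℕ) (s : S) : ℝ≥0∞ :=
  ∑' s' : {s' : S // lam s' + 1 = lam s}, P s s'

/-- Total probability of keeping the same level. -/
def Peq (P : S → S → ℝ≥0∞) (lam : S → ℕ) (s : S) : ℝ≥0∞ :=
  ∑' s' : {s' : S // lam s' = lam s}, P s s'

/-- `(C, λ)` is `(p⁺, N₀)`-divergent. -/
def Divergent (P : S → S → ℝ≥0∞) (lam : S → ℕ) (pplus : ℝ≥0∞) (N₀ : ℕ) : Prop :=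
  1/2 < pplus ∧ ∀ s : S, N₀ < lam s → Peq P lam s < 1 →
    pplus ≤ Pup P lam s / (Pdown P lam s + Pup P lam s)

end

open scoped Classical

section Thms

variable {S : Type*}

section Lems
variable {S : Type*}

lemma pathProb_singleton (P : S → S → ℝ≥0∞) (s : S) : pathProb P [s] = 1 := rfl

lemma pathProb_cons (P : S → S → ℝ≥0∞) (a : S) {l : List S} {b : S}
    (h : l.head? = some b) : pathProb P (a :: l) = P a b * pathProb P l := by
  cases l with
  | nil => simp at h
  | cons c t =>
    obtain rfl : c = b := by simpa using h
    rfl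

lemma FirstHitPath.eq_singleton {T : Set S} {s : S} (hs : s ∈ T) {l : List S}
    (hl : FirstHitPath T s l) : l = [s] := by
  obtain ⟨hhead, hne, hlast, hint⟩ := hl
  cases l with
  | nil => exact absurd rfl hne
  | cons a t =>
    have ha : a = s := by simpa using hhead
    subst ha
    cases t with
    | nil => rfl
    | cons b t' =>
      exact absurd (show (a :: b :: t').get ⟨0, by simp⟩ ∈ T from hs)
        (hint ⟨0, by simp⟩ (by simp))

lemma firstHitPath_singleton {T : Set S} {s : S} (hs : s ∈ T) :
    FirstHitPath T s [s] :=
  ⟨rfl, List.cons_ne_nil _ _, hs, fun i hi => by simp at hi⟩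

lemma FirstHitPath.cons {T : Set S} {s s' : S} (hs : s ∉ T) {l : List S}
    (hl : FirstHitPath T s' l) : FirstHitPath T s (s :: l) := by
  obtain ⟨hhead, hne, hlast, hint⟩ := hl
  refine ⟨rfl, List.cons_ne_nil _ _, ?_, ?_⟩
  · rw [List.getLast_cons hne]; exact hlast
  · rintro ⟨i, hi⟩ hlt
    match i, hi, hlt with
    | 0, _, _ => simpa using hs
    | (j+1), hj, hlt =>
      have hj' : j < l.length := by simpa using hj
      have hlt' : j + 1 < l.length := by simpa using hlt
      have : (s :: l).get ⟨j+1, hj⟩ = l.get ⟨j, hj'⟩ := rfl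
      rw [this]
      exact hint ⟨j, hj'⟩ hlt'

lemma FirstHitPath.cons_elim {T : Set S} {s : S} (hs : s ∉ T) {l : List S}
    (hl : FirstHitPath T s l) :
    ∃ t : List S, l = s :: t ∧ ∃ s', t.head? = some s' ∧ FirstHitPath T s' t := by
  obtain ⟨hhead, hne, hlast, hint⟩ := hl
  cases l with
  | nil => exact absurd rfl hne
  | cons a t =>
    have ha : a = s := by simpa using hhead
    subst ha
    cases t with
    | nil => exact absurd (show a ∈ T by simpa using hlast) hs
    | cons b t' =>
      refine ⟨b :: t', rfl, b, rfl, rfl, List.cons_ne_nil _ _, ?_, ?_⟩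
      · rw [← List.getLast_cons (l := b :: t') (List.cons_ne_nil _ _)]
        exact hlast
      · rintro ⟨i, hi⟩ hlt
        have hi2 : i + 1 < (a :: b :: t').length := by simp at hi ⊢; omega
        have hlt2 : (i+1) + 1 < (a :: b :: t').length := by simp at hlt ⊢; omega
        have : (b :: t').get ⟨i, hi⟩ = (a :: b :: t').get ⟨i+1, hi2⟩ := rfl
        rw [this]
        exact hint ⟨i+1, hi2⟩ hlt2

end Lems

lemma tsum_set_mono {α : Type*} {A B : Set α} (f : α → ℝ≥0∞) (h : A ⊆ B) :
    ∑' x : A, f x ≤ ∑' x : B, f x := by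
  rw [tsum_subtype, tsum_subtype]
  exact ENNReal.tsum_le_tsum fun x =>
    Set.indicator_le_indicator_of_subset h (fun _ => zero_le) x

lemma tsum_iSup_mono {ι : Type*} {f : ℕ → ι → ℝ≥0∞} (hf : ∀ i, Monotone fun n => f n i) :
    ∑' i, ⨆ n, f n i = ⨆ n, ∑' i, f n i := by
  refine le_antisymm ?_ (iSup_le fun n => ENNReal.tsum_le_tsum fun i => le_iSup (f · i) n)
  rw [ENNReal.tsum_eq_iSup_sum]
  refine iSup_le fun F => ?_
  rw [ENNReal.finsetSum_iSup_of_monotone hf]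
  exact iSup_mono fun n => ENNReal.sum_le_tsum F

/-- First-hit paths of length at most `n+1`. -/
def hitQ {S : Type*} (T : Set S) (s : S) (n : ℕ) : Set (List S) :=
  {l | FirstHitPath T s l ∧ l.length ≤ n + 1}

/-- Truncated reachability probability. -/
noncomputable def Rn {S : Type*} (P : S → S → ℝ≥0∞) (T : Set S) (s : S) (n : ℕ) : ℝ≥0∞ :=
  ∑' l : hitQ T s n, pathProb P (l : List S)

section Lems2
variable {S : Type*}

lemma Rn_mono (P : S → S → ℝ≥0∞) (T : Set S) (s : S) : Monotone (Rn P T s) := by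
  intro n m hnm
  exact tsum_set_mono _ fun l hl => ⟨hl.1, hl.2.trans (by omega)⟩

lemma reachProb_eq_iSup_Rn (P : S → S → ℝ≥0∞) (T : Set S) (s : S) :
    reachProb P T s = ⨆ n, Rn P T s n := by
  refine le_antisymm ?_ (iSup_le fun n => tsum_set_mono _ fun l hl => hl.1)
  have h1 : reachProb P T s
      = ∑' l : List S, Set.indicator {l | FirstHitPath T s l} (pathProb P) l :=
    tsum_subtype _ _
  rw [h1, ENNReal.tsum_eq_iSup_sum]
  refine iSup_le fun F => ?_
  refine le_trans ?_ (le_iSup _ (F.sup List.length))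
  rw [Rn, tsum_subtype]
  refine le_trans (Finset.sum_le_sum fun l hl => ?_) (ENNReal.sum_le_tsum F)
  by_cases hfhp : FirstHitPath T s l
  · have hmem : l ∈ hitQ T s (F.sup List.length) :=
      ⟨hfhp, le_trans (Finset.le_sup hl) (by omega)⟩
    exact le_of_eq ((Set.indicator_of_mem
      (show l ∈ {l | FirstHitPath T s l} from hfhp) _).trans
      (Set.indicator_of_mem hmem _).symm)
  · exact le_trans (le_of_eq (Set.indicator_of_notMem
      (show l ∉ {l | FirstHitPath T s l} from hfhp) _)) zero_le

lemma Rn_of_mem (P : S → S → ℝ≥0∞) {T : Set S} {s : S} (hs : s ∈ T) (n : ℕ) :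
    Rn P T s n = 1 := by
  have huniq : ∀ l : hitQ T s n, l = (⟨[s], firstHitPath_singleton hs, by simp⟩ : hitQ T s n) :=
    fun ⟨l, hl, _⟩ => Subtype.ext (hl.eq_singleton hs)
  rw [Rn, tsum_eq_single (⟨[s], firstHitPath_singleton hs, by simp⟩ : hitQ T s n)
    (fun b hb => absurd (huniq b) hb)]
  rfl

lemma reachProb_of_mem (P : S → S → ℝ≥0∞) {T : Set S} {s : S} (hs : s ∈ T) :
    reachProb P T s = 1 := by
  have huniq : ∀ l : {l : List S // FirstHitPath T s l},
      l = ⟨[s], firstHitPath_singleton hs⟩ :=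
    fun ⟨l, hl⟩ => Subtype.ext (hl.eq_singleton hs)
  rw [reachProb, tsum_eq_single (⟨[s], firstHitPath_singleton hs⟩ :
    {l : List S // FirstHitPath T s l}) (fun b hb => absurd (huniq b) hb)]
  rfl

lemma Rn_zero (P : S → S → ℝ≥0∞) {T : Set S} {s : S} (hs : s ∉ T) :
    Rn P T s 0 = 0 := by
  have : hitQ T s 0 = ∅ := by
    refine Set.eq_empty_iff_forall_notMem.2 fun l ⟨⟨hhead, hne, hlast, _⟩, hlen⟩ => ?_
    cases l with
    | nil => exact hne rfl
    | cons a t =>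
      have ha : a = s := by simpa using hhead
      subst ha
      cases t with
      | nil => exact hs (by simpa using hlast)
      | cons b t' => simp at hlen
  rw [Rn, this, tsum_empty]

lemma Rn_succ (P : S → S → ℝ≥0∞) {T : Set S} {s : S} (hs : s ∉ T) (n : ℕ) :
    Rn P T s (n + 1) = ∑' s', P s s' * Rn P T s' n := by
  have key : ∀ x : (Σ s' : S, hitQ T s' n), (s :: (x.2 : List S)) ∈ hitQ T s (n+1) :=
    fun ⟨s', l, hl, hlen⟩ => ⟨hl.cons hs, by simpa using hlen.trans (by omega)⟩
  let Φ : (Σ s' : S, hitQ T s' n) → hitQ T s (n+1) :=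
    fun x => ⟨s :: (x.2 : List S), key x⟩
  have hbij : Function.Bijective Φ := by
    constructor
    · rintro ⟨s₁, l₁, h₁⟩ ⟨s₂, l₂, h₂⟩ h
      have hl : l₁ = l₂ := by
        have := congrArg Subtype.val h
        simpa [Φ] using this
      have hs12 : s₁ = s₂ := by
        have e1 := h₁.1.1
        have e2 := h₂.1.1
        rw [hl] at e1
        rw [e1] at e2
        exact Option.some_injective _ e2
      subst hs12
      simp [hl]
    · rintro ⟨l, hl, hlen⟩
      obtain ⟨t, rfl, s', hh, ht⟩ := hl.cons_elim hs
      refine ⟨⟨s', t, ht, ?_⟩, Subtype.ext rfl⟩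
      simpa using Nat.succ_le_succ_iff.mp (by simpa using hlen)
  calc Rn P T s (n+1) = ∑' x : (Σ s' : S, hitQ T s' n), pathProb P ((Φ x) : List S) :=
        ((Equiv.ofBijective Φ hbij).tsum_eq _).symm
    _ = ∑' s' : S, ∑' l : hitQ T s' n, pathProb P (s :: (l : List S)) :=
        ENNReal.tsum_sigma' _
    _ = ∑' s' : S, ∑' l : hitQ T s' n, P s s' * pathProb P (l : List S) := by
        refine tsum_congr fun s' => tsum_congr fun l => ?_
        exact pathProb_cons P s l.2.1.1
    _ = ∑' s', P s s' * Rn P T s' n := by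
        refine tsum_congr fun s' => ?_
        rw [Rn, ENNReal.tsum_mul_left]

lemma reachProb_step (P : S → S → ℝ≥0∞) {T : Set S} {s : S} (hs : s ∉ T) :
    reachProb P T s = ∑' s', P s s' * reachProb P T s' := by
  have hshift : (⨆ n, Rn P T s n) = ⨆ n, Rn P T s (n+1) :=
    le_antisymm (iSup_le fun n => (Rn_mono P T s (by omega : n ≤ n + 1)).trans (le_iSup (fun n => Rn P T s (n+1)) n))
      (iSup_le fun n => le_iSup (Rn P T s) (n+1))
  rw [reachProb_eq_iSup_Rn, hshift]
  have : ∀ n, Rn P T s (n+1) = ∑' s', P s s' * Rn P T s' n := fun n => Rn_succ P hs n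
  simp_rw [this]
  rw [← tsum_iSup_mono (f := fun n s' => P s s' * Rn P T s' n)
    (fun s' => fun a b hab => mul_le_mul_right (Rn_mono P T s' hab) _)]
  refine tsum_congr fun s' => ?_
  rw [reachProb_eq_iSup_Rn, ENNReal.mul_iSup]

end Lems2

lemma walk_tsum (p : ℝ≥0∞) (f : ℕ → ℝ≥0∞) {n : ℕ} (hn : n ≠ 0) :
    ∑' m, walkKernel p n m * f m = (1 - p) * f (n - 1) + p * f (n + 1) := by
  have hne : (n - 1 : ℕ) ≠ n + 1 := by omega
  have hval : ∀ m, m ∉ ({n - 1, n + 1} : Finset ℕ) → walkKernel p n m * f m = 0 := by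
    intro m hm
    simp only [Finset.mem_insert, Finset.mem_singleton] at hm
    push_neg at hm
    have h1 : m ≠ n + 1 := hm.2
    have h2 : m + 1 ≠ n := by omega
    simp [walkKernel, hn, h1, h2]
  rw [tsum_eq_sum hval, Finset.sum_pair hne]
  have e1 : walkKernel p n (n - 1) = 1 - p := by
    have h1 : (n - 1 : ℕ) ≠ n + 1 := by omega
    have h2 : (n - 1) + 1 = n := by omega
    simp [walkKernel, hn, h1, h2]
  have e2 : walkKernel p n (n + 1) = p := by simp [walkKernel, hn]
  rw [e1, e2]

lemma walk_reach {p : ℝ≥0∞} (hp : 1 / 2 < p) (hp1 : p < 1) (N₀ m : ℕ) :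
    reachProb (walkKernel p) (Set.Iic N₀) m = ((1 - p) / p) ^ (m - N₀) := by
  set κ : ℝ≥0∞ := (1 - p) / p with hκdef
  have hp0 : p ≠ 0 := by
    intro h; rw [h] at hp; exact (not_lt.2 zero_le) hp
  have hpt : p ≠ ⊤ := (hp1.trans ENNReal.one_lt_top).ne
  have h1p : 1 - p < p := by
    calc 1 - p ≤ 1 - 1/2 := tsub_le_tsub_left hp.le 1
    _ = 1/2 := by norm_num
    _ < p := hp
  have hκ1 : κ < 1 := by
    rw [hκdef, ENNReal.div_lt_iff (Or.inl hp0) (Or.inl hpt), one_mul]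
    exact h1p
  have h1pt : (1 : ℝ≥0∞) - p ≠ ⊤ := (tsub_le_self.trans_lt ENNReal.one_lt_top).ne
  have hκt : κ ≠ ⊤ := (hκ1.trans ENNReal.one_lt_top).ne
  have hpκ : p * κ = 1 - p := ENNReal.mul_div_cancel hp0 hpt
  have hpadd : p + (1 - p) = 1 := add_tsub_cancel_of_le hp1.le
  have hsup : ∀ k : ℕ, (1 - p) * κ ^ k + p * κ ^ (k + 2) = κ ^ (k + 1) := by
    intro k
    calc (1 - p) * κ ^ k + p * κ ^ (k + 2) = (p + p * κ) * κ ^ (k+1) := by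
          rw [← hpκ]; ring
    _ = κ ^ (k+1) := by rw [hpκ, hpadd, one_mul]
  -- upper bound on truncated probabilities
  have upper : ∀ n m : ℕ, Rn (walkKernel p) (Set.Iic N₀) m n ≤ κ ^ (m - N₀) := by
    intro n
    induction n with
    | zero =>
      intro m
      by_cases hm : m ≤ N₀
      · rw [Rn_of_mem _ (Set.mem_Iic.2 hm)]
        have : m - N₀ = 0 := by omega
        rw [this, pow_zero]
      · rw [Rn_zero _ (by simpa using hm)]
        exact zero_le
    | succ n ih =>
      intro m
      by_cases hm : m ≤ N₀
      · rw [Rn_of_mem _ (Set.mem_Iic.2 hm)]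
        have : m - N₀ = 0 := by omega
        rw [this, pow_zero]
      · have hm0 : m ≠ 0 := by omega
        rw [Rn_succ _ (by simpa using hm) n]
        calc ∑' m', walkKernel p m m' * Rn (walkKernel p) (Set.Iic N₀) m' n
            ≤ ∑' m', walkKernel p m m' * κ ^ (m' - N₀) :=
              ENNReal.tsum_le_tsum fun m' => mul_le_mul_right (ih m') _
          _ = (1 - p) * κ ^ (m - 1 - N₀) + p * κ ^ (m + 1 - N₀) :=
              walk_tsum p _ hm0
          _ ≤ κ ^ (m - N₀) := by
              obtain ⟨k, rfl⟩ : ∃ k, m = N₀ + k + 1 := ⟨m - N₀ - 1, by omega⟩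
              have e1 : N₀ + k + 1 - 1 - N₀ = k := by omega
              have e2 : N₀ + k + 1 + 1 - N₀ = k + 2 := by omega
              have e3 : N₀ + k + 1 - N₀ = k + 1 := by omega
              rw [e1, e2, e3, hsup k]
  set g : ℕ → ℝ≥0∞ := reachProb (walkKernel p) (Set.Iic N₀) with hg
  have g_le : ∀ m, g m ≤ κ ^ (m - N₀) := by
    intro m
    rw [hg, reachProb_eq_iSup_Rn]
    exact iSup_le fun n => upper n m
  have g_mem : ∀ m, m ≤ N₀ → g m = 1 := fun m hm =>
    reachProb_of_mem _ (Set.mem_Iic.2 hm)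
  have g_fin : ∀ m, g m ≠ ⊤ :=
    fun m => ((g_le m).trans_lt (lt_of_le_of_lt (pow_le_one' hκ1.le _) ENNReal.one_lt_top)).ne
  have g_rec : ∀ m, N₀ < m → g m = (1 - p) * g (m - 1) + p * g (m + 1) := by
    intro m hm
    have hm0 : m ≠ 0 := by omega
    rw [hg, reachProb_step _ (by simpa using hm.not_ge), walk_tsum p _ hm0]
  -- pass to real numbers
  set q : ℝ := p.toReal with hqdef
  set r : ℝ := κ.toReal with hrdef
  have hq0 : 0 < q := ENNReal.toReal_pos hp0 hpt
  have hqhalf : 1/2 < q := by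
    have := (ENNReal.toReal_lt_toReal (by norm_num) hpt).2 hp
    simpa using this
  have hq1 : q < 1 := by
    have := (ENNReal.toReal_lt_toReal hpt ENNReal.one_ne_top).2 hp1
    simpa using this
  have hr : r = (1 - q) / q := by
    rw [hrdef, hκdef, ENNReal.toReal_div, ENNReal.toReal_sub_of_le hp1.le ENNReal.one_ne_top]
    simp [hqdef]
  have hr0 : 0 < r := by rw [hr]; exact div_pos (by linarith) hq0
  have hr1 : r < 1 := by rw [hr, div_lt_one hq0]; linarith
  set b : ℕ → ℝ := fun k => (g (N₀ + k)).toReal with hbdef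
  have hb0 : b 0 = 1 := by simp [hbdef, g_mem N₀ le_rfl]
  have hbnn : ∀ k, 0 ≤ b k := fun k => ENNReal.toReal_nonneg
  have hble : ∀ k, b k ≤ r ^ k := by
    intro k
    have := (ENNReal.toReal_le_toReal (g_fin _) (ENNReal.pow_ne_top hκt)).2
      ((g_le (N₀ + k)).trans (le_of_eq (by rw [show N₀ + k - N₀ = k by omega])))
    rw [ENNReal.toReal_pow] at this
    exact this
  have hbrec : ∀ k, b (k + 1) = (1 - q) * b k + q * b (k + 2) := by
    intro k
    have h := g_rec (N₀ + k + 1) (by omega)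
    have e1 : N₀ + k + 1 - 1 = N₀ + k := by omega
    have e2 : N₀ + k + 1 + 1 = N₀ + (k + 2) := by omega
    rw [e1, e2] at h
    have := congrArg ENNReal.toReal h
    rw [ENNReal.toReal_add (ENNReal.mul_ne_top h1pt (g_fin _))
        (ENNReal.mul_ne_top hpt (g_fin _)), ENNReal.toReal_mul, ENNReal.toReal_mul,
        ENNReal.toReal_sub_of_le hp1.le ENNReal.one_ne_top] at this
    simpa [hbdef, hqdef, show N₀ + (k+1) = N₀ + k + 1 by omega] using this
  -- the deficit sequence
  set c : ℕ → ℝ := fun k => r ^ k - b k with hcdef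
  have hrrec : ∀ k : ℕ, r ^ (k + 1) = (1 - q) * r ^ k + q * r ^ (k + 2) := by
    intro k
    have base : r = (1 - q) + q * r ^ 2 := by
      rw [hr]; field_simp; ring
    calc r ^ (k+1) = r ^ k * r := pow_succ r k
      _ = r ^ k * ((1 - q) + q * r ^ 2) := by rw [← base]
      _ = (1 - q) * r ^ k + q * r ^ (k + 2) := by ring
  have hcrec : ∀ k, c (k + 1) = (1 - q) * c k + q * c (k + 2) := by
    intro k
    simp only [hcdef]
    rw [hbrec k, hrrec k]; ring
  have hc0 : c 0 = 0 := by simp [hcdef, hb0]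
  have hdelta : ∀ k, c (k + 1) - c k = r ^ k * c 1 := by
    intro k
    induction k with
    | zero => simp [hc0]
    | succ k ih =>
      have h2 : c (k + 2) - c (k + 1) = r * (c (k + 1) - c k) := by
        have hq0' : q ≠ 0 := hq0.ne'
        rw [hr]; field_simp; linarith [hcrec k]
      rw [h2, ih]; ring
  have hcsum : ∀ k, c k = c 1 * ∑ i ∈ Finset.range k, r ^ i := by
    intro k
    induction k with
    | zero => simp [hc0]
    | succ k ih =>
      have := hdelta k
      rw [Finset.sum_range_succ]
      have : c (k + 1) = c k + r ^ k * c 1 := by linarith [hdelta k]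
      rw [this, ih]; ring
  have hc1 : c 1 = 0 := by
    by_contra h
    have hc1pos : 0 < c 1 := lt_of_le_of_ne (by simpa [hcdef] using hble 1) (Ne.symm h)
    have hcle : ∀ k, c k ≤ r ^ k := fun k => by
      have := hbnn k; simp only [hcdef]; linarith
    obtain ⟨k, hk⟩ : ∃ k, r ^ k < c 1 / (1 - r + c 1) := by
      have htend := tendsto_pow_atTop_nhds_zero_of_lt_one hr0.le hr1
      have hpos : 0 < c 1 / (1 - r + c 1) := div_pos hc1pos (by linarith)
      exact (htend.eventually (gt_mem_nhds hpos)).exists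
    have h1r : 0 < 1 - r := by linarith
    have hd : 0 < 1 - r + c 1 := by linarith
    have hk2 : r ^ k * (1 - r + c 1) < c 1 := (lt_div_iff₀ hd).1 hk
    have hineq : c 1 * ((r ^ k - 1) / (r - 1)) ≤ r ^ k := by
      rw [← geom_sum_eq hr1.ne k, ← hcsum k]; exact hcle k
    have hS1 : ((r ^ k - 1) / (r - 1)) * (1 - r) = 1 - r ^ k := by
      have hne : r - 1 ≠ 0 := by linarith
      have h2 : (1 - r) = -(r - 1) := by ring
      rw [h2, mul_neg, div_mul_cancel₀ _ hne]
      ring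
    have hmul := mul_le_mul_of_nonneg_right hineq h1r.le
    rw [mul_assoc, hS1] at hmul
    nlinarith [hmul, hk2]
  have gval : ∀ k, g (N₀ + k) = κ ^ k := by
    intro k
    have hck : c k = 0 := by rw [hcsum k, hc1, zero_mul]
    have hbk : b k = r ^ k := by simp only [hcdef] at hck; linarith
    have : (g (N₀ + k)).toReal = (κ ^ k).toReal := by
      rw [ENNReal.toReal_pow]; exact hbk
    exact (ENNReal.toReal_eq_toReal_iff' (g_fin _) (ENNReal.pow_ne_top hκt)).1 this
  by_cases hm : m ≤ N₀
  · rw [g_mem m hm, show m - N₀ = 0 by omega, pow_zero]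
  · obtain ⟨k, rfl⟩ : ∃ k, m = N₀ + k := ⟨m - N₀, by omega⟩
    rw [gval k, show N₀ + k - N₀ = k by omega]

theorem stmt12 [Countable S] (P : S → S → ℝ≥0∞) (hP : IsStochastic P)
    (lam : S → ℕ) (hlmc : IsLMC P lam)
    (pplus p : ℝ≥0∞) (N₀ : ℕ) (hdiv : Divergent P lam pplus N₀)
    (hple : pplus ≤ 1) (hp1 : 1/2 < p) (hp2 : p < pplus) :
    IsAbstraction P {s : S | lam s ≤ N₀} (walkKernel p) (Set.Iic N₀)
      (fun s => lam s.val) := by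
  have hp1' : p < 1 := lt_of_lt_of_le hp2 hple
  set κ : ℝ≥0∞ := (1 - p) / p with hκdef
  have hp0 : p ≠ 0 := by
    intro h; rw [h] at hp1; exact (not_lt.2 zero_le) hp1
  have hpt : p ≠ ⊤ := (hp1'.trans ENNReal.one_lt_top).ne
  have h1p : 1 - p < p := by
    calc 1 - p ≤ 1 - 1/2 := tsub_le_tsub_left hp1.le 1
    _ = 1/2 := by norm_num
    _ < p := hp1
  have hκ1 : κ < 1 := by
    rw [hκdef, ENNReal.div_lt_iff (Or.inl hp0) (Or.inl hpt), one_mul]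
    exact h1p
  have hκt : κ ≠ ⊤ := (hκ1.trans ENNReal.one_lt_top).ne
  have hwr : ∀ m, reachProb (walkKernel p) (Set.Iic N₀) m = κ ^ (m - N₀) :=
    walk_reach hp1 hp1' N₀
  constructor
  · intro s hsF
    simpa using hsF
  · intro s hsF
    have hn : N₀ < lam s.val := by simpa using hsF
    set n := lam s.val with hndef
    obtain ⟨k, hk⟩ : ∃ k, n = N₀ + k + 1 := ⟨n - N₀ - 1, by omega⟩
    have hPzero : ∀ s', lam s' + 1 < n → P s.val s' = 0 := by
      intro s' h
      by_contra hne
      have := hlmc.1 s.val s' (pos_iff_ne_zero.2 hne)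
      omega
    set D : Set S := {x | lam x + 1 = n} with hD
    set E : Set S := {x | lam x = n} with hE
    set U : Set S := {x | n < lam x} with hU
    set Pd := Pdown P lam s.val with hPd
    set Pe := Peq P lam s.val with hPe
    set Pu := Pup P lam s.val with hPu
    have htd : Pd = ∑' s' : S, D.indicator (P s.val) s' := by
      rw [hPd]; simp only [Pdown]; exact tsum_subtype _ _
    have hte : Pe = ∑' s' : S, E.indicator (P s.val) s' := by
      rw [hPe]; simp only [Peq]; exact tsum_subtype _ _
    have htu : Pu = ∑' s' : S, U.indicator (P s.val) s' := by
      rw [hPu]; simp only [Pup]; exact tsum_subtype _ _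
    have hone : Pd + Pe + Pu = 1 := by
      rw [htd, hte, htu, ← ENNReal.tsum_add, ← ENNReal.tsum_add, ← hP s.val]
      refine tsum_congr fun s' => ?_
      by_cases hd : lam s' + 1 = n
      · have h1 : ¬(lam s' = n) := by omega
        have h2 : ¬(n < lam s') := by omega
        simp [Set.indicator_apply, hD, hE, hU, hd, h1, h2]
      · by_cases he : lam s' = n
        · have h2 : ¬(n < lam s') := by omega
          simp [Set.indicator_apply, hD, hE, hU, hd, he, h2]
        · by_cases hu : n < lam s'
          · simp [Set.indicator_apply, hD, hE, hU, hd, he, hu]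
          · have hz := hPzero s' (by omega)
            simp [Set.indicator_apply, hD, hE, hU, hd, he, hu, hz]
    -- rewrite reachability values
    have goal2 : ∑' s' : S, P s.val s' * κ ^ (lam s' - N₀)
        ≤ Pd * κ ^ k + Pe * κ ^ (k+1) + Pu * κ ^ (k+2) := by
      have hsplit2 : ∀ s', P s.val s' * κ ^ (lam s' - N₀) ≤
          D.indicator (P s.val) s' * κ ^ k + E.indicator (P s.val) s' * κ ^ (k+1)
            + U.indicator (P s.val) s' * κ ^ (k+2) := by
        intro s'
        by_cases hd : lam s' + 1 = n
        · have h1 : ¬(lam s' = n) := by omega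
          have h2 : ¬(n < lam s') := by omega
          have he : lam s' - N₀ = k := by omega
          simp [Set.indicator_apply, hD, hE, hU, hd, h1, h2, he]
        · by_cases he : lam s' = n
          · have h2 : ¬(n < lam s') := by omega
            have he2 : lam s' - N₀ = k + 1 := by omega
            have hn2 : n - N₀ = k + 1 := by omega
            simp [Set.indicator_apply, hD, hE, hU, hd, he, h2, he2, hn2]
          · by_cases hu : n < lam s'
            · have he2 : k + 2 ≤ lam s' - N₀ := by omega
              have hpow : κ ^ (lam s' - N₀) ≤ κ ^ (k + 2) :=
                pow_le_pow_right_of_le_one' hκ1.le he2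
              calc P s.val s' * κ ^ (lam s' - N₀) ≤ P s.val s' * κ ^ (k+2) :=
                    mul_le_mul_right hpow _
                _ ≤ _ := by
                    simp [Set.indicator_apply, hD, hE, hU, hd, he, hu]
            · have hz := hPzero s' (by omega)
              simp [hz]
      calc ∑' s' : S, P s.val s' * κ ^ (lam s' - N₀)
          ≤ ∑' s' : S, (D.indicator (P s.val) s' * κ ^ k
              + E.indicator (P s.val) s' * κ ^ (k+1)
              + U.indicator (P s.val) s' * κ ^ (k+2)) :=
            ENNReal.tsum_le_tsum hsplit2
        _ = Pd * κ ^ k + Pe * κ ^ (k+1) + Pu * κ ^ (k+2) := by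
            rw [ENNReal.tsum_add, ENNReal.tsum_add, ENNReal.tsum_mul_right,
              ENNReal.tsum_mul_right, ENNReal.tsum_mul_right, ← htd, ← hte, ← htu]
    -- arithmetic: Pd * κ^k + Pe * κ^(k+1) + Pu * κ^(k+2) ≤ κ^(k+1)
    have harith : Pd * κ ^ k + Pe * κ ^ (k+1) + Pu * κ ^ (k+2) ≤ κ ^ (k+1) := by
      have hPdle : Pd ≤ 1 := hone ▸ le_add_right (le_add_right le_rfl)
      have hPele : Pe ≤ 1 := hone ▸ le_add_right (le_add_left le_rfl)
      have hPule : Pu ≤ 1 := hone ▸ le_add_left le_rfl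
      have hPdt : Pd ≠ ⊤ := (hPdle.trans_lt ENNReal.one_lt_top).ne
      have hPet : Pe ≠ ⊤ := (hPele.trans_lt ENNReal.one_lt_top).ne
      have hPut : Pu ≠ ⊤ := (hPule.trans_lt ENNReal.one_lt_top).ne
      by_cases hPe1 : Pe = 1
      · have h0 : Pd + Pu = 0 := by
          have h1 : Pe + (Pd + Pu) = Pe + 0 :=
            calc Pe + (Pd + Pu) = Pd + Pe + Pu := by ring
              _ = 1 := hone
              _ = Pe := hPe1.symm
              _ = Pe + 0 := (add_zero Pe).symm
          exact (ENNReal.add_right_inj hPet).1 h1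
        have hd0 : Pd = 0 := by
          have := add_eq_zero.1 h0; exact this.1
        have hu0 : Pu = 0 := by
          have := add_eq_zero.1 h0; exact this.2
        rw [hd0, hu0, hPe1, zero_mul, one_mul, zero_mul, zero_add, add_zero]
      · have hPelt : Pe < 1 := lt_of_le_of_ne hPele hPe1
        have hTne : Pd + Pu ≠ 0 := by
          intro h0
          have hd0 : Pd = 0 := (add_eq_zero.1 h0).1
          have hu0 : Pu = 0 := (add_eq_zero.1 h0).2
          rw [hd0, hu0, zero_add, add_zero] at hone
          exact hPe1 hone
        have hTt : Pd + Pu ≠ ⊤ := ENNReal.add_ne_top.2 ⟨hPdt, hPut⟩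
        have hdiv2 : pplus ≤ Pu / (Pd + Pu) := hdiv.2 s.val hn hPelt
        have hmul : pplus * (Pd + Pu) ≤ Pu :=
          (ENNReal.le_div_iff_mul_le (Or.inl hTne) (Or.inl hTt)).1 hdiv2
        -- pass to the reals
        have hppt : pplus ≠ ⊤ := (hple.trans_lt ENNReal.one_lt_top).ne
        set x : ℝ := Pd.toReal with hx
        set y : ℝ := Pe.toReal with hy
        set z : ℝ := Pu.toReal with hz
        set q : ℝ := p.toReal with hq
        set pr : ℝ := pplus.toReal with hpr
        set r : ℝ := κ.toReal with hrdef
        have hxnn : 0 ≤ x := ENNReal.toReal_nonneg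
        have hynn : 0 ≤ y := ENNReal.toReal_nonneg
        have hznn : 0 ≤ z := ENNReal.toReal_nonneg
        have hq0 : 0 < q := ENNReal.toReal_pos hp0 hpt
        have hqhalf : 1/2 < q := by
          have := (ENNReal.toReal_lt_toReal (by norm_num) hpt).2 hp1
          simpa using this
        have hq1 : q < 1 := by
          have := (ENNReal.toReal_lt_toReal hpt ENNReal.one_ne_top).2 hp1'
          simpa using this
        have hqpr : q < pr := (ENNReal.toReal_lt_toReal hpt hppt).2 hp2
        have hpr1 : pr ≤ 1 := by
          have := (ENNReal.toReal_le_toReal hppt ENNReal.one_ne_top).2 hple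
          simpa using this
        have hr : r = (1 - q) / q := by
          rw [hrdef, hκdef, ENNReal.toReal_div,
            ENNReal.toReal_sub_of_le hp1'.le ENNReal.one_ne_top]
          simp [hq]
        have hr0 : 0 < r := by rw [hr]; exact div_pos (by linarith) hq0
        have hr1 : r < 1 := by rw [hr, div_lt_one hq0]; linarith
        have hxyz : x + y + z = 1 := by
          have := congrArg ENNReal.toReal hone
          rw [ENNReal.toReal_add (ENNReal.add_ne_top.2 ⟨hPdt, hPet⟩) hPut,
            ENNReal.toReal_add hPdt hPet] at this
          simpa [hx, hy, hz] using this
        have hzx : pr * (x + z) ≤ z := by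
          have := (ENNReal.toReal_le_toReal
            (ENNReal.mul_ne_top hppt hTt) hPut).2 hmul
          rw [ENNReal.toReal_mul, ENNReal.toReal_add hPdt hPut] at this
          simpa [hx, hz, hpr] using this
        have hstep : x * q ≤ z * (1 - q) := by
          nlinarith [mul_nonneg hxnn (sub_nonneg.2 hqpr.le),
            mul_nonneg hznn (sub_nonneg.2 hqpr.le)]
        have key : x ≤ z * r := by
          rw [hr, ← mul_div_assoc]
          exact (le_div_iff₀ hq0).2 hstep
        have h2 : x + z * r ^ 2 ≤ (x + z) * r := by
          nlinarith [mul_nonneg (sub_nonneg.2 key) (sub_nonneg.2 hr1.le)]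
        have hκkt : ∀ j : ℕ, κ ^ j ≠ ⊤ := fun j => ENNReal.pow_ne_top hκt
        have hfinL : Pd * κ ^ k + Pe * κ ^ (k+1) + Pu * κ ^ (k+2) ≠ ⊤ :=
          ENNReal.add_ne_top.2 ⟨ENNReal.add_ne_top.2
            ⟨ENNReal.mul_ne_top hPdt (hκkt k), ENNReal.mul_ne_top hPet (hκkt (k+1))⟩,
            ENNReal.mul_ne_top hPut (hκkt (k+2))⟩
        rw [← ENNReal.toReal_le_toReal hfinL (hκkt (k+1))]
        rw [ENNReal.toReal_add (ENNReal.add_ne_top.2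
            ⟨ENNReal.mul_ne_top hPdt (hκkt k), ENNReal.mul_ne_top hPet (hκkt (k+1))⟩)
            (ENNReal.mul_ne_top hPut (hκkt (k+2))),
          ENNReal.toReal_add (ENNReal.mul_ne_top hPdt (hκkt k))
            (ENNReal.mul_ne_top hPet (hκkt (k+1))),
          ENNReal.toReal_mul, ENNReal.toReal_mul, ENNReal.toReal_mul,
          ENNReal.toReal_pow, ENNReal.toReal_pow, ENNReal.toReal_pow]
        have h3 := mul_le_mul_of_nonneg_left h2 (pow_nonneg hr0.le k)
        have hrk : (0:ℝ) ≤ r ^ k := pow_nonneg hr0.le k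
        rw [← hrdef, ← hx, ← hy, ← hz]
        have e1 : r ^ (k+1) = r ^ k * r := pow_succ r k
        have e2 : r ^ (k+2) = r ^ k * (r * r) := by ring
        rw [e1, e2]
        have h4 : (x + y + z) * (r ^ k * r) = r ^ k * r := by rw [hxyz, one_mul]
        nlinarith [h3, h4]
    -- put everything together
    calc ∑' s' : SA P {s : S | lam s ≤ N₀},
          P s.val s'.val * reachProb (walkKernel p) (Set.Iic N₀) (lam s'.val)
        = ∑' s' : SA P {s : S | lam s ≤ N₀}, P s.val s'.val * κ ^ (lam s'.val - N₀) := by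
          refine tsum_congr fun s' => ?_
          rw [hwr]
      _ ≤ ∑' s' : S, P s.val s' * κ ^ (lam s' - N₀) := by
          refine le_trans (le_of_eq (tsum_subtype {x : S | x ∉ Av P {s : S | lam s ≤ N₀}}
            (fun x => P s.val x * κ ^ (lam x - N₀)))) ?_
          exact ENNReal.tsum_le_tsum fun s' => Set.indicator_le_self _ _ s'
      _ ≤ Pd * κ ^ k + Pe * κ ^ (k+1) + Pu * κ ^ (k+2) := goal2
      _ ≤ κ ^ (k+1) := harith
      _ = reachProb (walkKernel p) (Set.Iic N₀) (lam s.val) := by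
          rw [hwr, show lam s.val - N₀ = k + 1 by omega]

end Thms
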